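/- (Lemma B.9: visit-count harmonic sum bound) Let X be a finite set with |X| ≥ 2, let K ≥ 1, and let x₁, …, x_K be a sequence of elements of X. For each k ∈ {1,…,K} let N_k = |{ i : 1 ≤ i < k, x_i = x_k }| be the number of occurrences of x_k strictly before index k. Then Σ_{k=1}^K 1/max{1, N_k} ≤ |X| · log(3K), where log denotes the natural logarithm. -/

import Mathlib

open Real Finset

/-- Midpoint lower bound for a log difference, via the integral of `1/t`. -/
lemma midpoint_le_log_sub {a b : ℝ} (ha : 0 < a) (hab : a ≤ b) :
    (b - a) * (2 / (a + b)) ≤ Real.log b - Real.log a := by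
  have hb : 0 < b := lt_of_lt_of_le ha hab
  have hc : 0 < a + b := by linarith
  set c : ℝ := (a + b) / 2 with hcdef
  have hcpos : 0 < c := by positivity
  have hlog : Real.log b - Real.log a = ∫ t in a..b, t⁻¹ := by
    rw [integral_inv_of_pos ha hb, Real.log_div hb.ne' ha.ne']
  have hmem : ∀ t ∈ Set.Icc a b, 0 < t := fun t ht => lt_of_lt_of_le ha ht.1
  have hint1 : IntervalIntegrable (fun t : ℝ => 2 / c - t / c ^ 2) MeasureTheory.volume a b :=
    ((continuous_const.sub (continuous_id.div_const _))).intervalIntegrable a b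
  have hint2 : IntervalIntegrable (fun t : ℝ => t⁻¹) MeasureTheory.volume a b := by
    apply ContinuousOn.intervalIntegrable
    apply ContinuousOn.inv₀ continuousOn_id
    intro t ht
    rw [Set.uIcc_of_le hab] at ht
    exact (hmem t ht).ne'
  have hmono : (∫ t in a..b, (2 / c - t / c ^ 2)) ≤ ∫ t in a..b, t⁻¹ := by
    apply intervalIntegral.integral_mono_on hab hint1 hint2
    intro t ht
    have htpos : 0 < t := hmem t ht
    rw [div_sub_div _ _ hcpos.ne' (by positivity), div_le_iff₀ (by positivity)]
    have h1 : t⁻¹ * (c * c ^ 2) = c ^ 3 / t := by field_simp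
    rw [h1, le_div_iff₀ htpos]
    nlinarith [sq_nonneg (t - c), sq_nonneg t, hcpos.le, htpos.le]
  have hval : (∫ t in a..b, (2 / c - t / c ^ 2)) = (b - a) * (2 / (a + b)) := by
    have hint3 : IntervalIntegrable (fun t : ℝ => t / c ^ 2) MeasureTheory.volume a b :=
      Continuous.intervalIntegrable (by continuity) a b
    rw [intervalIntegral.integral_sub (intervalIntegrable_const) hint3]
    have h1 : (∫ t in a..b, (2 / c : ℝ)) = (b - a) * (2 / c) :=
      intervalIntegral.integral_const _
    have h2 : (∫ t in a..b, t / c ^ 2) = (∫ t in a..b, t) / c ^ 2 :=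
      intervalIntegral.integral_div _ _
    rw [h1, h2, integral_id, hcdef]
    field_simp
    ring
  rw [hlog]
  rw [hval] at hmono
  exact hmono

/-- Sharp-enough harmonic sum bound: `H_n ≤ log (2n+1)`. -/
lemma harmonic_le_log (n : ℕ) :
    ∑ j ∈ Finset.Icc 1 n, (1 : ℝ) / j ≤ Real.log (2 * n + 1) := by
  induction n with
  | zero => simp
  | succ n ih =>
    rw [Finset.sum_Icc_succ_top (by omega)]
    have key := midpoint_le_log_sub (a := 2 * (n : ℝ) + 1) (b := 2 * (n : ℝ) + 3)
      (by positivity) (by linarith)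
    have harith : ((2 * (n : ℝ) + 3) - (2 * n + 1)) * (2 / ((2 * n + 1) + (2 * n + 3)))
        = 1 / ((n : ℝ) + 1) := by
      have : (n : ℝ) + 1 > 0 := by positivity
      field_simp
      ring
    rw [harith] at key
    push_cast
    have : (2 : ℝ) * (n + 1) + 1 = 2 * n + 3 := by ring
    rw [this]
    linarith

/-- Enumeration: summing `f` of the rank over a finset of naturals equals summing over a range. -/
lemma sum_rank_eq_sum_range (s : Finset ℕ) (f : ℕ → ℝ) :
    ∑ k ∈ s, f ((s.filter (· < k)).card) = ∑ j ∈ Finset.range s.card, f j := by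
  induction s using Finset.induction_on_max with
  | empty => simp
  | insert a s ha ih =>
    have hns : a ∉ s := fun h => lt_irrefl a (ha a h)
    rw [Finset.sum_insert hns, Finset.card_insert_of_notMem hns, Finset.sum_range_succ]
    have h1 : ((insert a s).filter (· < a)) = s := by
      ext i
      simp only [Finset.mem_filter, Finset.mem_insert]
      constructor
      · rintro ⟨h | h, hlt⟩
        · omega
        · exact h
      · intro h
        exact ⟨Or.inr h, ha i h⟩
    have h2 : ∀ k ∈ s, ((insert a s).filter (· < k)).card = (s.filter (· < k)).card := by
      intro k hk
      congr 1
      ext i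
      simp only [Finset.mem_filter, Finset.mem_insert]
      constructor
      · rintro ⟨h | h, hlt⟩
        · exfalso; have := ha k hk; omega
        · exact ⟨h, hlt⟩
      · rintro ⟨h, hlt⟩
        exact ⟨Or.inr h, hlt⟩
    rw [h1, Finset.sum_congr rfl (fun k hk => by rw [h2 k hk]), ih, add_comm]

/-- Per-value bound: the visit-harmonic sum of one fiber of size `m ≥ 1`. -/
lemma fiber_sum_le (m : ℕ) (hm : 1 ≤ m) :
    ∑ j ∈ Finset.range m, (1 : ℝ) / ((max 1 j : ℕ) : ℝ) ≤ 1 + Real.log (2 * m) := by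
  obtain ⟨n, rfl⟩ : ∃ n, m = n + 1 := ⟨m - 1, by omega⟩
  have hsplit : Finset.range (n + 1) = insert 0 (Finset.Icc 1 n) := by
    ext i
    simp only [Finset.mem_range, Finset.mem_insert, Finset.mem_Icc]
    omega
  rw [hsplit, Finset.sum_insert (by simp)]
  have h0 : (1 : ℝ) / ((max 1 0 : ℕ) : ℝ) = 1 := by norm_num
  have hcongr : ∑ j ∈ Finset.Icc 1 n, (1 : ℝ) / ((max 1 j : ℕ) : ℝ)
      = ∑ j ∈ Finset.Icc 1 n, (1 : ℝ) / j := by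
    apply Finset.sum_congr rfl
    intro j hj
    have : 1 ≤ j := (Finset.mem_Icc.mp hj).1
    rw [max_eq_right this]
  rw [h0, hcongr]
  have h1 := harmonic_le_log n
  have h2 : Real.log (2 * (n : ℝ) + 1) ≤ Real.log (2 * ((n : ℕ) + 1 : ℕ)) := by
    apply Real.log_le_log (by positivity)
    push_cast
    linarith
  push_cast at h2 ⊢
  linarith

theorem harmonic_visit_bound {X : Type*} [Fintype X] [DecidableEq X]
    (hX : 2 ≤ Fintype.card X) (K : ℕ) (hK : 1 ≤ K) (x : ℕ → X) :
    ∑ k ∈ Finset.Icc 1 K,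
      (1 : ℝ) / ((max 1 (((Finset.Ico 1 k).filter (fun i => x i = x k)).card) : ℕ) : ℝ) ≤
      (Fintype.card X : ℝ) * Real.log (3 * K) := by
  classical
  set C : ℕ := Fintype.card X with hCdef
  set g : ℕ → ℝ := fun j => (1 : ℝ) / ((max 1 j : ℕ) : ℝ) with hgdef
  set m : X → ℕ := fun v => ((Finset.Icc 1 K).filter (fun k => x k = v)).card with hmdef
  -- fiberwise decomposition
  have hfib : ∑ v : X, ∑ k ∈ (Finset.Icc 1 K).filter (fun k => x k = v),
      g (((Finset.Ico 1 k).filter (fun i => x i = x k)).card)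
      = ∑ k ∈ Finset.Icc 1 K, g (((Finset.Ico 1 k).filter (fun i => x i = x k)).card) :=
    Finset.sum_fiberwise_of_maps_to (fun k _ => Finset.mem_univ (x k)) _
  -- rewrite each fiber sum as a range sum
  have hfiber_eq : ∀ v : X,
      ∑ k ∈ (Finset.Icc 1 K).filter (fun k => x k = v),
        g (((Finset.Ico 1 k).filter (fun i => x i = x k)).card)
      = ∑ j ∈ Finset.range (m v), g j := by
    intro v
    set s : Finset ℕ := (Finset.Icc 1 K).filter (fun k => x k = v) with hsdef
    have hstep : ∀ k ∈ s, ((Finset.Ico 1 k).filter (fun i => x i = x k))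
        = s.filter (· < k) := by
      intro k hk
      obtain ⟨hk1, hk2⟩ := Finset.mem_filter.mp hk
      obtain ⟨hk3, hk4⟩ := Finset.mem_Icc.mp hk1
      ext i
      simp only [hsdef, Finset.mem_filter, Finset.mem_Ico, Finset.mem_Icc, hk2]
      constructor
      · rintro ⟨⟨h1, h2⟩, h3⟩
        exact ⟨⟨⟨h1, by omega⟩, h3⟩, h2⟩
      · rintro ⟨⟨⟨h1, _⟩, h3⟩, h4⟩
        exact ⟨⟨h1, h4⟩, h3⟩
    calc ∑ k ∈ s, g (((Finset.Ico 1 k).filter (fun i => x i = x k)).card)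
        = ∑ k ∈ s, g ((s.filter (· < k)).card) :=
          Finset.sum_congr rfl (fun k hk => by rw [hstep k hk])
      _ = ∑ j ∈ Finset.range s.card, g j := sum_rank_eq_sum_range s g
  set T : Finset X := Finset.univ.filter (fun v => 0 < m v) with hTdef
  have hm0 : ∀ v : X, v ∉ T → m v = 0 := by
    intro v hv
    by_contra h
    exact hv (Finset.mem_filter.mpr ⟨Finset.mem_univ v, Nat.pos_of_ne_zero h⟩)
  have hsum_T : ∑ v : X, ∑ j ∈ Finset.range (m v), g j
      = ∑ v ∈ T, ∑ j ∈ Finset.range (m v), g j := by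
    symm
    apply Finset.sum_filter_of_ne
    intro v _ hne
    by_contra h
    simp only [not_lt, Nat.le_zero] at h
    rw [h] at hne
    simp at hne
  -- total mass
  have hmass_univ : ∑ v : X, m v = K := by
    have := Finset.card_eq_sum_card_fiberwise
      (f := x) (s := Finset.Icc 1 K) (t := Finset.univ) (fun k _ => Finset.mem_univ (x k))
    rw [hmdef]
    rw [← this, Nat.card_Icc]
    omega
  have hmass : ∑ v ∈ T, m v = K := by
    rw [← hmass_univ]
    apply Finset.sum_filter_of_ne
    intro v _ hne
    exact Nat.pos_of_ne_zero hne
  set D : ℕ := T.card with hDdef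
  have hD1 : 1 ≤ D := by
    have hx1 : x 1 ∈ T := by
      apply Finset.mem_filter.mpr
      refine ⟨Finset.mem_univ _, ?_⟩
      apply Finset.card_pos.mpr
      exact ⟨1, Finset.mem_filter.mpr ⟨Finset.mem_Icc.mpr ⟨le_refl 1, hK⟩, rfl⟩⟩
    exact Finset.card_pos.mpr ⟨x 1, hx1⟩
  have hDC : D ≤ C := by
    calc D = T.card := rfl
      _ ≤ Finset.univ.card := Finset.card_le_card (Finset.filter_subset _ _)
      _ = C := rfl
  have hDK : D ≤ K := by
    have := Finset.card_nsmul_le_sum T m 1 (fun v hv => (Finset.mem_filter.mp hv).2)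
    simpa [hmass] using this
  -- real versions
  have hDR : (1 : ℝ) ≤ (D : ℝ) := by exact_mod_cast hD1
  have hKR : (1 : ℝ) ≤ (K : ℝ) := by exact_mod_cast hK
  have hDpos : (0 : ℝ) < (D : ℝ) := by linarith
  have hKpos : (0 : ℝ) < (K : ℝ) := by linarith
  -- per-fiber bound and tangent-line bound
  have hstep1 : ∑ v ∈ T, ∑ j ∈ Finset.range (m v), g j
      ≤ ∑ v ∈ T, (1 + Real.log 2 + Real.log (m v)) := by
    apply Finset.sum_le_sum
    intro v hv
    have hmv : 1 ≤ m v := (Finset.mem_filter.mp hv).2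
    have := fiber_sum_le (m v) hmv
    have hmvR : (0 : ℝ) < (m v : ℝ) := by exact_mod_cast hmv
    rw [Real.log_mul (by norm_num) hmvR.ne'] at this
    calc ∑ j ∈ Finset.range (m v), g j
        = ∑ j ∈ Finset.range (m v), (1 : ℝ) / ((max 1 j : ℕ) : ℝ) := rfl
      _ ≤ 1 + (Real.log 2 + Real.log (m v)) := this
      _ = 1 + Real.log 2 + Real.log (m v) := by ring
  have htangent : ∑ v ∈ T, Real.log (m v)
      ≤ (D : ℝ) * Real.log K - (D : ℝ) * Real.log D := by
    have hbound : ∀ v ∈ T, Real.log (m v)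
        ≤ Real.log K - Real.log D + (m v : ℝ) * (D : ℝ) / (K : ℝ) - 1 := by
      intro v hv
      have hmv : 1 ≤ m v := (Finset.mem_filter.mp hv).2
      have hmvR : (0 : ℝ) < (m v : ℝ) := by exact_mod_cast hmv
      have harg : (0 : ℝ) < (m v : ℝ) * (D : ℝ) / (K : ℝ) := by positivity
      have h1 := Real.log_le_sub_one_of_pos harg
      have h2 : Real.log ((m v : ℝ) * (D : ℝ) / (K : ℝ))
          = Real.log (m v) + Real.log D - Real.log K := by
        rw [Real.log_div (by positivity) hKpos.ne', Real.log_mul hmvR.ne' hDpos.ne']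
      rw [h2] at h1
      linarith
    calc ∑ v ∈ T, Real.log (m v)
        ≤ ∑ v ∈ T, (Real.log K - Real.log D + (m v : ℝ) * (D : ℝ) / (K : ℝ) - 1) :=
          Finset.sum_le_sum hbound
      _ = (D : ℝ) * (Real.log K - Real.log D) + (∑ v ∈ T, (m v : ℝ)) * (D : ℝ) / (K : ℝ)
          - (D : ℝ) := by
          rw [Finset.sum_sub_distrib, Finset.sum_add_distrib, Finset.sum_const, Finset.sum_const]
          rw [← Finset.sum_div, ← Finset.sum_mul]
          push_cast
          ring
      _ = (D : ℝ) * Real.log K - (D : ℝ) * Real.log D := by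
          have : ∑ v ∈ T, (m v : ℝ) = (K : ℝ) := by exact_mod_cast congrArg Nat.cast hmass
          rw [this]
          field_simp
          ring
  -- numeric facts
  have hlog3 : (1 : ℝ) ≤ Real.log 3 := by
    have h1 : Real.exp 1 ≤ 3 := (Real.exp_one_lt_d9.trans (by norm_num)).le
    calc (1 : ℝ) = Real.log (Real.exp 1) := (Real.log_exp 1).symm
      _ ≤ Real.log 3 := Real.log_le_log (Real.exp_pos 1) h1
  have hlog45 : (1 : ℝ) ≤ Real.log (9 / 2) := by
    have h1 : Real.exp 1 ≤ 9 / 2 := (Real.exp_one_lt_d9.trans (by norm_num)).le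
    calc (1 : ℝ) = Real.log (Real.exp 1) := (Real.log_exp 1).symm
      _ ≤ Real.log (9 / 2) := Real.log_le_log (Real.exp_pos 1) h1
  have hlog2pos : (0 : ℝ) ≤ Real.log 2 := Real.log_nonneg (by norm_num)
  have hlogKpos : (0 : ℝ) ≤ Real.log K := Real.log_nonneg hKR
  have hlogDpos : (0 : ℝ) ≤ Real.log D := Real.log_nonneg hDR
  have hCR : (2 : ℝ) ≤ (C : ℝ) := by exact_mod_cast hX
  have hrhs : Real.log (3 * (K : ℝ)) = Real.log 3 + Real.log K :=
    Real.log_mul (by norm_num) hKpos.ne'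
  -- final assembly
  have hmain : ∑ k ∈ Finset.Icc 1 K, g (((Finset.Ico 1 k).filter (fun i => x i = x k)).card)
      ≤ (D : ℝ) * (1 + Real.log 2) + ((D : ℝ) * Real.log K - (D : ℝ) * Real.log D) := by
    rw [← hfib]
    calc ∑ v : X, ∑ k ∈ (Finset.Icc 1 K).filter (fun k => x k = v),
          g (((Finset.Ico 1 k).filter (fun i => x i = x k)).card)
        = ∑ v : X, ∑ j ∈ Finset.range (m v), g j :=
          Finset.sum_congr rfl (fun v _ => hfiber_eq v)
      _ = ∑ v ∈ T, ∑ j ∈ Finset.range (m v), g j := hsum_T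
      _ ≤ ∑ v ∈ T, (1 + Real.log 2 + Real.log (m v)) := hstep1
      _ = (D : ℝ) * (1 + Real.log 2) + ∑ v ∈ T, Real.log (m v) := by
          rw [Finset.sum_add_distrib, Finset.sum_const]
          push_cast
          ring
      _ ≤ (D : ℝ) * (1 + Real.log 2) + ((D : ℝ) * Real.log K - (D : ℝ) * Real.log D) := by
          linarith
  have hfinal : (D : ℝ) * (1 + Real.log 2) + ((D : ℝ) * Real.log K - (D : ℝ) * Real.log D)
      ≤ (C : ℝ) * Real.log (3 * (K : ℝ)) := by
    rw [hrhs]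
    rcases eq_or_lt_of_le hD1 with hD1' | hD2
    · -- D = 1
      have hD1'' : (D : ℝ) = 1 := by exact_mod_cast hD1'.symm
      rw [hD1'']
      have h9 : Real.log 9 = Real.log 2 + Real.log (9 / 2) := by
        rw [← Real.log_mul (by norm_num) (by norm_num)]
        norm_num
      have h92 : Real.log 9 = 2 * Real.log 3 := by
        rw [show (9 : ℝ) = 3 ^ 2 by norm_num, Real.log_pow]
        push_cast
        ring
      have hkey : 1 + Real.log 2 ≤ 2 * Real.log 3 := by
        rw [← h92, h9]
        linarith
      have hDRC : (2 : ℝ) * Real.log K ≤ (C : ℝ) * Real.log K := by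
        apply mul_le_mul_of_nonneg_right hCR hlogKpos
      have h3C : (2 : ℝ) * Real.log 3 ≤ (C : ℝ) * Real.log 3 := by
        apply mul_le_mul_of_nonneg_right hCR (by linarith)
      simp only [Real.log_one]
      nlinarith
    · -- D ≥ 2
      have hD2' : (2 : ℕ) ≤ D := hD2
      have hD2R : (2 : ℝ) ≤ (D : ℝ) := by exact_mod_cast hD2'
      have hlogD2 : Real.log 2 ≤ Real.log D := Real.log_le_log (by norm_num) hD2R
      have hkey : 1 + Real.log 2 - Real.log D ≤ Real.log 3 := by linarith
      have hDRC : (D : ℝ) ≤ (C : ℝ) := by exact_mod_cast hDC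
      calc (D : ℝ) * (1 + Real.log 2) + ((D : ℝ) * Real.log K - (D : ℝ) * Real.log D)
          = (D : ℝ) * ((1 + Real.log 2 - Real.log D) + Real.log K) := by ring
        _ ≤ (D : ℝ) * (Real.log 3 + Real.log K) := by
            apply mul_le_mul_of_nonneg_left (by linarith) (by linarith)
        _ ≤ (C : ℝ) * (Real.log 3 + Real.log K) := by
            apply mul_le_mul_of_nonneg_right hDRC (by linarith)
  calc ∑ k ∈ Finset.Icc 1 K,
        (1 : ℝ) / ((max 1 (((Finset.Ico 1 k).filter (fun i => x i = x k)).card) : ℕ) : ℝ)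
      = ∑ k ∈ Finset.Icc 1 K, g (((Finset.Ico 1 k).filter (fun i => x i = x k)).card) := rfl
    _ ≤ (D : ℝ) * (1 + Real.log 2) + ((D : ℝ) * Real.log K - (D : ℝ) * Real.log D) := hmain
    _ ≤ (C : ℝ) * Real.log (3 * (K : ℝ)) := hfinal
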